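/- Let G be a countable group, X a countable set, α: G ↷ X an action, and suppose α is sofic. Then for every ε > 0, finite F ⊆ G symmetric containing 1, and finite E ⊆ X, there exists a finite set A, a unital (F,ε)-multiplicative map φ: G → Sym(A), a finite set B, a subset S ⊆ A with |S| > (1−ε)|A|, and injective maps π_s: E ↪ B (s ∈ S) with the orbit-approximation compatibility; moreover if α is faithful on E in the sense that for g ∈ F∖{1} there exists x ∈ E with α(g)x ≠ x and α(g)x, x ∈ E, then additionally d(1, φ(g)) can be taken > 1 − 3ε for all such g. -/

import Mathlib

open scoped Classical Pointwise

noncomputable def hDist {A : Type*} [Fintype A] (σ τ : Equiv.Perm A) : ℝ :=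
  ((Finset.univ.filter fun a => σ a ≠ τ a).card : ℝ) / (Fintype.card A : ℝ)

/-- `φ : G → Sym(Fin n)` is an `(F, E, ε)`-orbit approximation of the action `α : G ↷ X`. -/
def IsOrbitApprox {G X : Type*} [Group G] {n : ℕ} (α : G →* Equiv.Perm X)
    (F : Finset G) (E : Finset X) (ε : ℝ) (φ : G → Equiv.Perm (Fin n)) : Prop :=
  ∃ (m : ℕ) (S : Finset (Fin n)) (π : Fin n → X → Fin m),
    ((S.card : ℝ) > (1 - ε) * (n : ℝ)) ∧
    (∀ s ∈ S, Set.InjOn (π s) (E : Set X)) ∧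
    (∀ s ∈ S, ∀ g ∈ F, ∀ x ∈ E, φ g s ∈ S → α g⁻¹ x ∈ E →
      π (φ g s) x = π s (α g⁻¹ x))

/-- Soficity of an action `α : G ↷ X` given as a homomorphism `G →* Sym(X)`. -/
def SoficAction {G X : Type*} [Group G] (α : G →* Equiv.Perm X) : Prop :=
  ∀ (F : Finset G) (E : Finset X) (ε : ℝ), 0 < ε →
    ∃ (n : ℕ) (φ : G → Equiv.Perm (Fin n)),
      φ 1 = 1 ∧
      (∀ g ∈ F, ∀ h ∈ F, hDist (φ (g * h)) (φ g * φ h) < ε) ∧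
      IsOrbitApprox α F E ε φ

/-- Soficity of a group. -/
def SoficGroup (G : Type*) [Group G] : Prop :=
  ∀ (F : Finset G) (ε : ℝ), 0 < ε →
    ∃ (n : ℕ) (φ : G → Equiv.Perm (Fin n)),
      φ 1 = 1 ∧
      (∀ g ∈ F, ∀ h ∈ F, hDist (φ (g * h)) (φ g * φ h) < ε) ∧
      (∀ g ∈ F, g ≠ 1 → hDist 1 (φ g) > 1 - ε)

theorem stmt_17 {G X : Type*} [Group G] [Countable G] [Countable X]
    (α : G →* Equiv.Perm X) (hα : SoficAction α)
    (ε : ℝ) (hε : 0 < ε)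
    (F : Finset G) (hsym : ∀ g ∈ F, g⁻¹ ∈ F) (h1F : (1 : G) ∈ F)
    (E : Finset X) :
    ∃ (n : ℕ) (φ : G → Equiv.Perm (Fin n)),
      φ 1 = 1 ∧
      (∀ g ∈ F, ∀ h ∈ F, hDist (φ (g * h)) (φ g * φ h) < ε) ∧
      ∃ (m : ℕ) (S : Finset (Fin n)) (π : Fin n → X → Fin m),
        ((S.card : ℝ) > (1 - ε) * (n : ℝ)) ∧
        (∀ s ∈ S, Set.InjOn (π s) (E : Set X)) ∧
        (∀ s ∈ S, ∀ g ∈ F, ∀ x ∈ E, φ g s ∈ S → α g⁻¹ x ∈ E →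
          π (φ g s) x = π s (α g⁻¹ x)) ∧
        (∀ g ∈ F, g ≠ 1 → (∃ x ∈ E, α g x ≠ x ∧ α g x ∈ E) →
          hDist 1 (φ g) > 1 - 3 * ε) := by
  obtain ⟨n, φ, h1, hmult, m, S, π, hS, hinj, hcompat⟩ := hα F E ε hε
  refine ⟨n, φ, h1, hmult, m, S, π, hS, hinj, hcompat, ?_⟩
  intro g hg hg1 ⟨x, hxE, hne, hgxE⟩
  have hn : 0 < n := by
    by_contra hn
    push_neg at hn
    interval_cases n
    have : S.card ≤ 0 := le_trans (Finset.card_le_card (Finset.subset_univ S)) (by simp)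
    simp at this
    rw [this] at hS
    norm_num at hS
  -- every s ∈ S is moved by φ g
  have hmove : ∀ s ∈ S, φ g s ≠ s := by
    intro s hs heq
    have hmem : φ g s ∈ S := by rw [heq]; exact hs
    have hinv : α g⁻¹ (α g x) = x := by
      simp [map_inv]
    have hinvE : α g⁻¹ (α g x) ∈ E := by rw [hinv]; exact hxE
    have := hcompat s hs g hg (α g x) hgxE hmem hinvE
    rw [heq, hinv] at this
    exact hne (hinj s hs hgxE hxE this)
  have hnpos : (0 : ℝ) < n := by exact_mod_cast hn
  have : hDist 1 (φ g) > 1 - ε := by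
    unfold hDist
    rw [Fintype.card_fin, gt_iff_lt, lt_div_iff₀ hnpos]
    refine lt_of_lt_of_le hS (Nat.cast_le.mpr (Finset.card_le_card ?_))
    intro s hs
    convert (Finset.mem_filter (s := Finset.univ) (p := fun a => (1 : Equiv.Perm (Fin n)) a ≠ φ g a)).mpr ⟨Finset.mem_univ s, fun h => hmove s hs h.symm⟩
  have : (1 : ℝ) - ε > 1 - 3 * ε := by linarith
  linarith
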